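/- In the max-plus gadget graph H, there exists a path from u_0 to w_{N−1} with hop count at most N+2 and total weight strictly less than 15W if and only if there exist ℓ ∈ {1,…,M} and i, j, k ∈ {0,…,N−1} with i + j ≤ k and c[k] < a_ℓ[i] + b_ℓ[j]. -/

import Mathlib

/-- Vertex set of the max-plus gadget graph: `U ⊕ V ⊕ W ⊕ X`. -/
abbrev MPVert (N M : ℕ) := (Fin N ⊕ Fin N) ⊕ (Fin N ⊕ Fin M)

/-- Vertex `u_i`. -/
def vu (N M : ℕ) (i : Fin N) : MPVert N M := Sum.inl (Sum.inl i)
/-- Vertex `v_j`. -/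
def vv (N M : ℕ) (j : Fin N) : MPVert N M := Sum.inl (Sum.inr j)
/-- Vertex `w_k`. -/
def vw (N M : ℕ) (k : Fin N) : MPVert N M := Sum.inr (Sum.inl k)
/-- Vertex `x_ℓ`. -/
def vx (N M : ℕ) (l : Fin M) : MPVert N M := Sum.inr (Sum.inr l)

/-- Adjacency (as a `Bool`) of the max-plus gadget graph. -/
def mpAdjB (N M : ℕ) : MPVert N M → MPVert N M → Bool
  | Sum.inl (Sum.inl i), Sum.inl (Sum.inl i') => i.val + 1 == i'.val || i'.val + 1 == i.val
  | Sum.inl (Sum.inr j), Sum.inl (Sum.inr j') => j.val + 1 == j'.val || j'.val + 1 == j.val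
  | Sum.inr (Sum.inl k), Sum.inr (Sum.inl k') => k.val + 1 == k'.val || k'.val + 1 == k.val
  | Sum.inl (Sum.inl _), Sum.inr (Sum.inr _) => true
  | Sum.inr (Sum.inr _), Sum.inl (Sum.inl _) => true
  | Sum.inr (Sum.inr _), Sum.inl (Sum.inr _) => true
  | Sum.inl (Sum.inr _), Sum.inr (Sum.inr _) => true
  | Sum.inl (Sum.inr j), Sum.inr (Sum.inl _) => j.val == 0
  | Sum.inr (Sum.inl _), Sum.inl (Sum.inr j) => j.val == 0
  | _, _ => false

/-- The max-plus gadget graph. -/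
def mpGraph (N M : ℕ) : SimpleGraph (MPVert N M) where
  Adj x y := mpAdjB N M x y = true
  symm := by
    constructor
    rintro ((i | j) | (k | l)) ((i' | j') | (k' | l')) h <;>
      simp_all [mpAdjB] <;> omega
  loopless := by
    constructor
    rintro ((i | j) | (k | l)) h <;> simp_all [mpAdjB]

/-- The edge weights of the max-plus gadget graph. -/
def mpW (N M : ℕ) (W : ℤ) (a b : Fin M → Fin N → ℤ) (c : Fin N → ℤ) :
    MPVert N M → MPVert N M → ℤ
  | Sum.inl (Sum.inl i), Sum.inr (Sum.inr l) => 5 * W - a l i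
  | Sum.inr (Sum.inr l), Sum.inl (Sum.inl i) => 5 * W - a l i
  | Sum.inr (Sum.inr l), Sum.inl (Sum.inr j) => 5 * W - b l j
  | Sum.inl (Sum.inr j), Sum.inr (Sum.inr l) => 5 * W - b l j
  | Sum.inl (Sum.inr _), Sum.inr (Sum.inl k) => 5 * W + c k
  | Sum.inr (Sum.inl k), Sum.inl (Sum.inr _) => 5 * W + c k
  | _, _ => 0

/-- The total weight of a walk: the sum of the weights of its edges, with multiplicity. -/
def walkWeight {V : Type*} {G : SimpleGraph V} (w : V → V → ℤ) {s t : V}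
    (p : G.Walk s t) : ℤ :=
  (p.darts.map fun d => w d.toProd.1 d.toProd.2).sum

section auxw
variable {V : Type*} {G : SimpleGraph V} (w : V → V → ℤ)

@[simp] lemma walkWeight_nil {s : V} : walkWeight w (SimpleGraph.Walk.nil : G.Walk s s) = 0 := rfl

@[simp] lemma walkWeight_cons {s t u : V} (h : G.Adj s t) (p : G.Walk t u) :
    walkWeight w (SimpleGraph.Walk.cons h p) = w s t + walkWeight w p := by
  simp [walkWeight]

@[simp] lemma walkWeight_append {s t u : V} (p : G.Walk s t) (q : G.Walk t u) :
    walkWeight w (p.append q) = walkWeight w p + walkWeight w q := by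
  simp [walkWeight, SimpleGraph.Walk.darts_append]

@[simp] lemma walkWeight_concat {s t u : V} (p : G.Walk s t) (h : G.Adj t u) :
    walkWeight w (p.concat h) = walkWeight w p + w t u := by
  simp [walkWeight, SimpleGraph.Walk.darts_concat]

lemma walkWeight_bypass_le [DecidableEq V] {s t : V} (p : G.Walk s t)
    (hw : ∀ x y, 0 ≤ w x y) : walkWeight w p.bypass ≤ walkWeight w p := by
  have hnd : p.bypass.darts.Nodup :=
    List.Nodup.of_map SimpleGraph.Dart.edge
      (by simpa [SimpleGraph.Walk.edges] using p.bypass_isPath.isTrail.edges_nodup)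
  obtain ⟨l, hperm, hsub⟩ := hnd.subperm p.darts_bypass_subset
  calc walkWeight w p.bypass
      = (l.map fun d => w d.toProd.1 d.toProd.2).sum := by
        rw [walkWeight]; exact (List.Perm.sum_eq (hperm.map _)).symm
    _ ≤ (p.darts.map fun d => w d.toProd.1 d.toProd.2).sum :=
        List.Sublist.sum_le_sum (hsub.map _) (by
          intro x hx
          obtain ⟨d, -, rfl⟩ := List.mem_map.1 hx
          exact hw _ _)
    _ = walkWeight w p := rfl
end auxw

def KeyProp (N M : ℕ) (W : ℤ) (a b : Fin M → Fin N → ℤ) (c : Fin N → ℤ)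
    (s : MPVert N M) (wt : ℤ) (len : ℕ) : Prop :=
  match s with
  | Sum.inl (Sum.inl i) => 13*W ≤ wt ∧ (15*W ≤ wt ∨ ∃ (l : Fin M) (i' j k : Fin N),
      15*W - a l i' - b l j + c k ≤ wt ∧ (i' : ℤ) - (i : ℤ) + 3 + (j : ℤ) + ((N:ℤ)-1-(k:ℤ)) ≤ len)
  | Sum.inl (Sum.inr j) => 5*W ≤ wt ∧ (11*W ≤ wt ∨ ∃ k : Fin N,
      5*W + c k ≤ wt ∧ (j : ℤ) + 1 + ((N:ℤ)-1-(k:ℤ)) ≤ len)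
  | Sum.inr (Sum.inl k) => 0 ≤ wt ∧ (10*W ≤ wt ∨ (N:ℤ)-1-(k:ℤ) ≤ len)
  | Sum.inr (Sum.inr l) => 9*W ≤ wt ∧ (11*W ≤ wt ∨ ∃ (j k : Fin N),
      10*W - b l j + c k ≤ wt ∧ (j : ℤ) + 2 + ((N:ℤ)-1-(k:ℤ)) ≤ len)

lemma key (N M : ℕ) (hN : 1 ≤ N) (W : ℤ) (hW : 1 ≤ W)
    (a b : Fin M → Fin N → ℤ) (c : Fin N → ℤ)
    (ha : ∀ l i, 0 ≤ a l i ∧ a l i ≤ W) (hb : ∀ l j, 0 ≤ b l j ∧ b l j ≤ W)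
    (hc : ∀ k, 0 ≤ c k ∧ c k ≤ W) :
    ∀ (s t : MPVert N M) (p : (mpGraph N M).Walk s t),
      t = vw N M ⟨N - 1, by omega⟩ →
      KeyProp N M W a b c s (walkWeight (mpW N M W a b c) p) p.length := by
  intro s t p
  induction p with
  | nil =>
    rintro rfl
    refine ⟨le_refl 0, Or.inr ?_⟩
    simp only [SimpleGraph.Walk.length_nil, Nat.cast_zero]
    have : ((N - 1 : ℕ) : ℤ) = (N : ℤ) - 1 := by omega
    simp [this]
  | @cons s t _ h q ih0 =>
    intro ht
    have ih := ih0 ht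
    have h' : mpAdjB N M s t = true := h
    rw [walkWeight_cons, SimpleGraph.Walk.length_cons]
    set wq := walkWeight (mpW N M W a b c) q with hwq
    rcases s with ((i | j) | (k | l)) <;> rcases t with ((i' | j') | (k' | l')) <;>
        simp only [mpAdjB, Bool.or_eq_true, beq_iff_eq] at h'
    · -- u i → u i'
      obtain ⟨ih1, ih2⟩ := ih
      refine ⟨by simpa [mpW] using ih1, ?_⟩
      rcases ih2 with h15 | ⟨l, i'', j, k, hw, hl⟩
      · exact Or.inl (by simpa [mpW] using h15)
      · refine Or.inr ⟨l, i'', j, k, by simpa [mpW] using hw, ?_⟩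
        push_cast at hl ⊢
        omega
    · exact absurd h' (by simp)
    · exact absurd h' (by simp)
    · -- u i → x l'
      obtain ⟨ih1, ih2⟩ := ih
      have haW := ha l' i
      simp only [mpW]
      refine ⟨by linarith, ?_⟩
      rcases ih2 with h11 | ⟨j, k, hw, hl⟩
      · exact Or.inl (by linarith)
      · refine Or.inr ⟨l', i, j, k, by linarith, ?_⟩
        push_cast at hl ⊢
        omega
    · exact absurd h' (by simp)
    · -- v j → v j'
      obtain ⟨ih1, ih2⟩ := ih
      refine ⟨by simpa [mpW] using ih1, ?_⟩
      rcases ih2 with h11 | ⟨k, hw, hl⟩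
      · exact Or.inl (by simpa [mpW] using h11)
      · refine Or.inr ⟨k, by simpa [mpW] using hw, ?_⟩
        push_cast at hl ⊢
        omega
    · -- v j → w k'
      obtain ⟨ih1, ih2⟩ := ih
      have hcW := hc k'
      simp only [mpW]
      refine ⟨by linarith, ?_⟩
      rcases ih2 with h10 | hl
      · exact Or.inl (by linarith)
      · refine Or.inr ⟨k', by linarith, ?_⟩
        push_cast at hl ⊢
        omega
    · -- v j → x l'
      obtain ⟨ih1, -⟩ := ih
      have hbW := hb l' j
      simp only [mpW]
      exact ⟨by linarith, Or.inl (by linarith)⟩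
    · exact absurd h' (by simp)
    · -- w k → v j'
      obtain ⟨ih1, -⟩ := ih
      have hcW := hc k
      simp only [mpW]
      exact ⟨by linarith, Or.inl (by linarith)⟩
    · -- w k → w k'
      obtain ⟨ih1, ih2⟩ := ih
      refine ⟨by simpa [mpW] using ih1, ?_⟩
      rcases ih2 with h10 | hl
      · exact Or.inl (by simpa [mpW] using h10)
      · refine Or.inr ?_
        push_cast at hl ⊢
        omega
    · exact absurd h' (by simp)
    · -- x l → u i'
      obtain ⟨ih1, -⟩ := ih
      have haW := ha l i'
      simp only [mpW]
      exact ⟨by linarith, Or.inl (by linarith)⟩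
    · -- x l → v j'
      obtain ⟨ih1, ih2⟩ := ih
      have hbW := hb l j'
      simp only [mpW]
      refine ⟨by linarith, ?_⟩
      rcases ih2 with h11 | ⟨k, hw, hl⟩
      · exact Or.inl (by linarith)
      · refine Or.inr ⟨j', k, by linarith, ?_⟩
        push_cast at hl ⊢
        omega
    · exact absurd h' (by simp)
    · exact absurd h' (by simp)

lemma uchain (N M : ℕ) (W : ℤ) (a b : Fin M → Fin N → ℤ) (c : Fin N → ℤ) :
    ∀ (n : ℕ) (hn : n < N),
      ∃ p : (mpGraph N M).Walk (vu N M ⟨0, Nat.lt_of_le_of_lt (Nat.zero_le _) hn⟩)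
        (vu N M ⟨n, hn⟩),
        p.length = n ∧ walkWeight (mpW N M W a b c) p = 0 := by
  intro n
  induction n with
  | zero => exact fun hn => ⟨SimpleGraph.Walk.nil, rfl, rfl⟩
  | succ n ihn =>
    intro hn
    obtain ⟨p, hl, hw⟩ := ihn (by omega)
    have hadj : (mpGraph N M).Adj (vu N M ⟨n, by omega⟩) (vu N M ⟨n + 1, hn⟩) := by
      show mpAdjB _ _ _ _ = true
      simp [mpAdjB, vu]
    refine ⟨p.concat hadj, ?_, ?_⟩
    · rw [SimpleGraph.Walk.length_concat, hl]
    · rw [walkWeight_concat, hw]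
      simp [mpW, vu]

lemma vchain (N M : ℕ) (W : ℤ) (a b : Fin M → Fin N → ℤ) (c : Fin N → ℤ) :
    ∀ (n : ℕ) (hn : n < N),
      ∃ p : (mpGraph N M).Walk (vv N M ⟨n, hn⟩)
        (vv N M ⟨0, Nat.lt_of_le_of_lt (Nat.zero_le _) hn⟩),
        p.length = n ∧ walkWeight (mpW N M W a b c) p = 0 := by
  intro n
  induction n with
  | zero => exact fun hn => ⟨SimpleGraph.Walk.nil, rfl, rfl⟩
  | succ n ihn =>
    intro hn
    obtain ⟨p, hl, hw⟩ := ihn (by omega)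
    have hadj : (mpGraph N M).Adj (vv N M ⟨n + 1, hn⟩) (vv N M ⟨n, by omega⟩) := by
      show mpAdjB _ _ _ _ = true
      simp [mpAdjB, vv]
    refine ⟨SimpleGraph.Walk.cons hadj p, ?_, ?_⟩
    · rw [SimpleGraph.Walk.length_cons, hl]
    · rw [walkWeight_cons, hw]
      simp [mpW, vv]

lemma wchain (N M : ℕ) (hN : 1 ≤ N) (W : ℤ) (a b : Fin M → Fin N → ℤ) (c : Fin N → ℤ) :
    ∀ (d k : ℕ) (hk : k + d = N - 1),
      ∃ p : (mpGraph N M).Walk (vw N M ⟨k, by omega⟩) (vw N M ⟨N - 1, by omega⟩),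
        p.length = d ∧ walkWeight (mpW N M W a b c) p = 0 := by
  intro d
  induction d with
  | zero =>
    intro k hk
    have hkv : (⟨N - 1, by omega⟩ : Fin N) = ⟨k, by omega⟩ := Fin.ext (by simp; omega)
    refine ⟨(SimpleGraph.Walk.nil).copy (congrArg (vw N M) hkv) rfl, ?_, ?_⟩
    · simp
    · simp [walkWeight]
  | succ d ihd =>
    intro k hk
    obtain ⟨p, hl, hw⟩ := ihd (k + 1) (by omega)
    have hadj : (mpGraph N M).Adj (vw N M ⟨k, by omega⟩) (vw N M ⟨k + 1, by omega⟩) := by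
      show mpAdjB _ _ _ _ = true
      simp [mpAdjB, vw]
    refine ⟨SimpleGraph.Walk.cons hadj p, ?_, ?_⟩
    · rw [SimpleGraph.Walk.length_cons, hl]
    · rw [walkWeight_cons, hw]
      simp [mpW, vw]

lemma exists_walk (N M : ℕ) (hN : 1 ≤ N) (W : ℤ)
    (a b : Fin M → Fin N → ℤ) (c : Fin N → ℤ) (l : Fin M) (i j k : Fin N) :
    ∃ p : (mpGraph N M).Walk (vu N M ⟨0, by omega⟩) (vw N M ⟨N - 1, by omega⟩),
      p.length = i.val + j.val + (N - 1 - k.val) + 3 ∧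
      walkWeight (mpW N M W a b c) p = 15 * W - a l i - b l j + c k := by
  obtain ⟨pu, hul, huw⟩ := uchain N M W a b c i.val i.isLt
  obtain ⟨pv, hvl, hvw⟩ := vchain N M W a b c j.val j.isLt
  obtain ⟨pw, hwl, hww⟩ := wchain N M hN W a b c (N - 1 - k.val) k.val (by omega)
  have h1 : (mpGraph N M).Adj (vu N M ⟨i.val, i.isLt⟩) (vx N M l) := by
    show mpAdjB _ _ _ _ = true; rfl
  have h2 : (mpGraph N M).Adj (vx N M l) (vv N M ⟨j.val, j.isLt⟩) := by
    show mpAdjB _ _ _ _ = true; rfl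
  have h3 : (mpGraph N M).Adj (vv N M ⟨0, by omega⟩) (vw N M ⟨k.val, by omega⟩) := by
    show mpAdjB _ _ _ _ = true; rfl
  refine ⟨pu.append (SimpleGraph.Walk.cons h1 (SimpleGraph.Walk.cons h2
    (pv.append (SimpleGraph.Walk.cons h3 pw)))), ?_, ?_⟩
  · simp only [SimpleGraph.Walk.length_append, SimpleGraph.Walk.length_cons, hul, hvl, hwl]
    omega
  · simp only [walkWeight_append, walkWeight_cons, huw, hvw, hww]
    simp only [mpW, vu, vv, vw, vx, Fin.eta]
    ring

/-- In the max-plus gadget graph there is a path from `u_0` to `w_{N−1}`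
with at most `N+2` hops and total weight strictly less than `15W` iff there is a
violating quadruple `(i, j, k, ℓ)` with `i + j ≤ k` and `c[k] < a_ℓ[i] + b_ℓ[j]`. -/
theorem stmt8 (N M : ℕ) (hN : 1 ≤ N) (hM : 1 ≤ M) (W : ℤ) (hW : 1 ≤ W)
    (a b : Fin M → Fin N → ℤ) (c : Fin N → ℤ)
    (ha : ∀ l i, 0 ≤ a l i ∧ a l i ≤ W) (hb : ∀ l j, 0 ≤ b l j ∧ b l j ≤ W)
    (hc : ∀ k, 0 ≤ c k ∧ c k ≤ W) :
    (∃ p : (mpGraph N M).Walk (vu N M ⟨0, by omega⟩) (vw N M ⟨N - 1, by omega⟩),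
        p.IsPath ∧ p.length ≤ N + 2 ∧ walkWeight (mpW N M W a b c) p < 15 * W) ↔
    (∃ (l : Fin M) (i j k : Fin N), i.val + j.val ≤ k.val ∧ c k < a l i + b l j) := by

  constructor
  · rintro ⟨p, -, hlen, hwt⟩
    obtain ⟨-, h2⟩ := key N M hN W hW a b c ha hb hc _ _ p rfl
    rcases h2 with h15 | ⟨l, i', j, k, hw, hl⟩
    · linarith
    · refine ⟨l, i', j, k, ?_, by linarith⟩
      have hl' : (i'.val : ℤ) - 0 + 3 + j.val + ((N : ℤ) - 1 - k.val) ≤ p.length := hl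
      have hlen' : (p.length : ℤ) ≤ (N : ℤ) + 2 := by exact_mod_cast hlen
      omega
  · rintro ⟨l, i, j, k, hjk, hcab⟩
    obtain ⟨q, hql, hqw⟩ := exists_walk N M hN W a b c l i j k
    have hA : ∀ (l : Fin M) (i : Fin N), 0 ≤ 5 * W - a l i := fun l i => by
      linarith [(ha l i).2]
    have hB : ∀ (l : Fin M) (j : Fin N), 0 ≤ 5 * W - b l j := fun l j => by
      linarith [(hb l j).2]
    have hC : ∀ (k : Fin N), 0 ≤ 5 * W + c k := fun k => by linarith [(hc k).1]
    have hnn : ∀ x y, 0 ≤ mpW N M W a b c x y := by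
      rintro ((i' | j') | (k' | l')) ((i'' | j'') | (k'' | l'')) <;> simp only [mpW] <;>
        first
          | exact le_refl 0
          | apply hA
          | apply hB
          | apply hC
    refine ⟨q.bypass, q.bypass_isPath, ?_, ?_⟩
    · refine le_trans q.length_bypass_le ?_
      rw [hql]
      have := k.isLt
      omega
    · refine lt_of_le_of_lt (walkWeight_bypass_le _ q hnn) ?_
      rw [hqw]
      linarith
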